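/- (Expansion of the ETKF transformation.) Let B ∈ ℝ^{M×M} be symmetric positive semidefinite. Then ((Id_M + B)⁻¹)^{1/2} = Id_M − (1/2) B + (1/√π) ∫₀^∞ t^{−1/2} e^{−t} ( exp(−tB) − Id_M + tB ) dt, where ((Id_M + B)⁻¹)^{1/2} is the positive semidefinite square root of (Id_M + B)⁻¹ and the integral is a convergent Bochner integral. -/

import Mathlib

open Matrix MeasureTheory
open scoped Matrix.Norms.L2Operator NNReal RealInnerProductSpace

/-- The positive semidefinite square root of a positive semidefinite matrix (the definition
`Matrix.PosSemidef.sqrt` of the older Mathlib, since removed). -/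
noncomputable def Matrix.PosSemidef.sqrt {n : Type*} [Fintype n] {𝕜 : Type*} [RCLike 𝕜]
    [PartialOrder 𝕜] [StarOrderedRing 𝕜] [DecidableEq n] {A : Matrix n n 𝕜} (hA : A.PosSemidef) : Matrix n n 𝕜 :=
  hA.1.eigenvectorUnitary.1 * diagonal ((↑) ∘ (√·) ∘ hA.1.eigenvalues) *
  (star hA.1.eigenvectorUnitary : Matrix n n 𝕜)

open Set

section ETKFAux

lemma integrableOn_aux {a r : ℝ} (ha : 0 < a) (hr : 1 ≤ r) :
    IntegrableOn (fun t : ℝ => t ^ (a - 1) * Real.exp (-(r * t))) (Set.Ioi 0) volume := by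
  have h := Real.GammaIntegral_convergent ha
  refine Integrable.mono h ?_ ?_
  · apply Measurable.aestronglyMeasurable
    fun_prop
  · filter_upwards [ae_restrict_mem measurableSet_Ioi] with t ht
    have ht0 : (0:ℝ) < t := ht
    rw [Real.norm_eq_abs, Real.norm_eq_abs, abs_of_nonneg (by positivity),
      abs_of_nonneg (by positivity), mul_comm (Real.exp _)]
    gcongr
    nlinarith [ht0.le, hr]

lemma integral_aux {a r : ℝ} (ha : 0 < a) (hr : 0 < r) :
    ∫ t : ℝ in Ioi 0, t ^ (a - 1) * Real.exp (-(r * t)) = (1 / r) ^ a * Real.Gamma a :=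
  Real.integral_rpow_mul_exp_neg_mul_Ioi ha hr

lemma gamma_three_half : Real.Gamma (3 / 2) = Real.sqrt Real.pi / 2 := by
  rw [show (3/2:ℝ) = 1/2 + 1 by norm_num, Real.Gamma_add_one (by norm_num),
    Real.Gamma_one_half_eq]
  ring

lemma scalar_key {lam : ℝ} (hlam : 0 ≤ lam) :
    IntegrableOn (fun t : ℝ => (Real.sqrt t)⁻¹ * Real.exp (-t) *
      (Real.exp (-(t * lam)) - 1 + t * lam)) (Ioi 0) volume ∧
    ∫ t in Ioi (0:ℝ), (Real.sqrt t)⁻¹ * Real.exp (-t) * (Real.exp (-(t * lam)) - 1 + t * lam)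
      = Real.sqrt Real.pi * ((Real.sqrt (1 + lam))⁻¹ - 1 + lam / 2) := by
  have hr : (1:ℝ) ≤ 1 + lam := le_add_of_nonneg_right hlam
  have h1 := integrableOn_aux (a := 1/2) (r := 1 + lam) (by norm_num) hr
  have h2 := integrableOn_aux (a := 1/2) (r := 1) (by norm_num) le_rfl
  have h3 := integrableOn_aux (a := 3/2) (r := 1) (by norm_num) le_rfl
  have heq : EqOn (fun t : ℝ => (Real.sqrt t)⁻¹ * Real.exp (-t) *
      (Real.exp (-(t * lam)) - 1 + t * lam))
      (fun t : ℝ => (t ^ ((1/2:ℝ) - 1) * Real.exp (-((1 + lam) * t))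
        - t ^ ((1/2:ℝ) - 1) * Real.exp (-(1 * t)))
        + lam * (t ^ ((3/2:ℝ) - 1) * Real.exp (-(1 * t)))) (Ioi 0) := by
    intro t ht
    have ht0 : (0:ℝ) < t := ht
    have hs : (Real.sqrt t)⁻¹ = t ^ ((1/2:ℝ) - 1) := by
      rw [Real.sqrt_eq_rpow, ← Real.rpow_neg ht0.le]
      norm_num
    have hts : t * t ^ ((1/2:ℝ) - 1) = t ^ ((3/2:ℝ) - 1) := by
      nth_rewrite 1 [← Real.rpow_one t]
      rw [← Real.rpow_add ht0]
      norm_num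
    have hexp : Real.exp (-t) * Real.exp (-(t * lam)) = Real.exp (-((1 + lam) * t)) := by
      rw [← Real.exp_add]; ring_nf
    simp only [hs]
    rw [one_mul]
    calc t ^ ((1/2:ℝ) - 1) * Real.exp (-t) * (Real.exp (-(t * lam)) - 1 + t * lam)
        = t ^ ((1/2:ℝ) - 1) * (Real.exp (-t) * Real.exp (-(t * lam)))
          - t ^ ((1/2:ℝ) - 1) * Real.exp (-t)
          + lam * ((t * t ^ ((1/2:ℝ) - 1)) * Real.exp (-t)) := by ring
      _ = _ := by rw [hexp, hts]
  have hsub : IntegrableOn (fun t : ℝ => t ^ ((1/2:ℝ) - 1) * Real.exp (-((1 + lam) * t))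
        - t ^ ((1/2:ℝ) - 1) * Real.exp (-(1 * t))) (Ioi 0) volume := h1.sub h2
  have hmul : IntegrableOn (fun t : ℝ =>
      lam * (t ^ ((3/2:ℝ) - 1) * Real.exp (-(1 * t)))) (Ioi 0) volume := h3.const_mul lam
  have hint : IntegrableOn (fun t : ℝ => (t ^ ((1/2:ℝ) - 1) * Real.exp (-((1 + lam) * t))
        - t ^ ((1/2:ℝ) - 1) * Real.exp (-(1 * t)))
        + lam * (t ^ ((3/2:ℝ) - 1) * Real.exp (-(1 * t)))) (Ioi 0) volume := hsub.add hmul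
  constructor
  · exact hint.congr_fun heq.symm measurableSet_Ioi
  · rw [setIntegral_congr_fun measurableSet_Ioi heq, integral_add hsub hmul,
      integral_sub h1 h2, MeasureTheory.integral_const_mul,
      integral_aux (by norm_num) (by linarith), integral_aux (by norm_num) one_pos,
      integral_aux (by norm_num) one_pos, gamma_three_half, Real.Gamma_one_half_eq]
    have hv : ((1:ℝ) / (1 + lam)) ^ ((1:ℝ)/2) = (Real.sqrt (1 + lam))⁻¹ := by
      rw [← Real.sqrt_eq_rpow, one_div, Real.sqrt_inv]
    rw [hv]
    norm_num
    ring

end ETKFAux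

open scoped MatrixOrder in
lemma psd_sqrt_unique_aux {M : ℕ} {A C : Matrix (Fin M) (Fin M) ℝ} (hA : A.PosSemidef)
    (hC : C.PosSemidef) (h : C ^ 2 = A) : hA.sqrt = C := by
  have e : hA.sqrt = CFC.sqrt A := by
    rw [CFC.sqrt_eq_cfc, cfc_nnreal_eq_real _ A hA.nonneg, hA.1.cfc_eq]
    simp only [IsHermitian.cfc, Unitary.conjStarAlgAut_apply, Matrix.PosSemidef.sqrt]
    congr 3
    funext i
    simp only [Function.comp_apply, Real.coe_sqrt, Real.coe_toNNReal']
    exact congrArg (fun x => ((√x : ℝ) : ℝ)) (max_eq_left (hA.eigenvalues_nonneg i)).symm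
  rw [e]
  exact CFC.sqrt_unique (by rw [← sq]; exact h) hC.nonneg

/-- The ensemble mean `x̄ = (1/M) ∑ᵢ X⁽ⁱ⁾`. -/
noncomputable def ensMean {d M : ℕ} (X : Fin M → EuclideanSpace ℝ (Fin d)) :
    EuclideanSpace ℝ (Fin d) :=
  (M : ℝ)⁻¹ • ∑ i, X i

/-- The matrix of ensemble deviations, with columns `X⁽ⁱ⁾ − x̄`. -/
noncomputable def devMat {d M : ℕ} (X : Fin M → EuclideanSpace ℝ (Fin d)) :
    Matrix (Fin d) (Fin M) ℝ :=
  Matrix.of fun j i => (X i - ensMean X) j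

/-- The trace of the empirical covariance matrix,
`tr(P) = (1/(M−1)) ∑ᵢ ‖X⁽ⁱ⁾ − x̄‖²`. -/
noncomputable def trP {d M : ℕ} (X : Fin M → EuclideanSpace ℝ (Fin d)) : ℝ :=
  ((M : ℝ) - 1)⁻¹ * ∑ i, ‖X i - ensMean X‖ ^ 2

/-- expansion of the ETKF transformation: for `B` symmetric positive
semidefinite, `((Id + B)⁻¹)^{1/2} = Id − (1/2)B + (1/√π) ∫₀^∞ t^{−1/2} e^{−t}
(exp(−tB) − Id + tB) dt`, the integral being a convergent Bochner integral. -/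
theorem etkf_transformation_expansion {M : ℕ} (B : Matrix (Fin M) (Fin M) ℝ)
    (hB : B.PosSemidef)
    (h1 : (((1 : Matrix (Fin M) (Fin M) ℝ) + B)⁻¹).PosSemidef) :
    IntegrableOn
      (fun t : ℝ => ((Real.sqrt t)⁻¹ * Real.exp (-t)) •
        (NormedSpace.exp (-(t • B)) - 1 + t • B)) (Set.Ioi 0) volume ∧
    h1.sqrt = 1 - (2 : ℝ)⁻¹ • B + (Real.sqrt Real.pi)⁻¹ •
      ∫ t in Set.Ioi (0 : ℝ),
        ((Real.sqrt t)⁻¹ * Real.exp (-t)) • (NormedSpace.exp (-(t • B)) - 1 + t • B) := by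
  classical
  set u : Matrix (Fin M) (Fin M) ℝ := (hB.1.eigenvectorUnitary : Matrix (Fin M) (Fin M) ℝ) with hu_def
  set ev : Fin M → ℝ := hB.1.eigenvalues with hev_def
  have hu1 : u * star u = 1 := Matrix.mem_unitaryGroup_iff.mp hB.1.eigenvectorUnitary.2
  have hu2 : star u * u = 1 := Matrix.mem_unitaryGroup_iff'.mp hB.1.eigenvectorUnitary.2
  set L : (Fin M → ℝ) →ₗ[ℝ] Matrix (Fin M) (Fin M) ℝ :=
    { toFun := fun v => u * Matrix.diagonal v * star u
      map_add' := fun v w => by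
        rw [show v + w = fun i => v i + w i from rfl, ← Matrix.diagonal_add,
          Matrix.mul_add, Matrix.add_mul]
      map_smul' := fun c v => by
        rw [Matrix.diagonal_smul, Matrix.mul_smul, Matrix.smul_mul, RingHom.id_apply] }
    with hL_def
  have hL : ∀ v, L v = u * Matrix.diagonal v * star u := fun _ => rfl
  have hone : L 1 = 1 := by rw [hL, show (1 : Fin M → ℝ) = fun _ => (1:ℝ) from rfl, Matrix.diagonal_one, Matrix.mul_one, hu1]
  have hspec : B = L ev := by
    rw [hL]
    simpa using hB.1.spectral_theorem
  have hmul : ∀ v w, L v * L w = L (v * w) := by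
    intro v w
    simp only [hL, Matrix.mul_assoc]
    rw [← Matrix.mul_assoc (star u) u, hu2, Matrix.one_mul,
      ← Matrix.mul_assoc (Matrix.diagonal v), Matrix.diagonal_mul_diagonal]
    rfl
  have hexp : ∀ t : ℝ, NormedSpace.exp (-(t • B)) = L (fun i => Real.exp (-(t * ev i))) := by
    intro t
    have h0 : -(t • B) = L (-(t • ev)) := by
      rw [hspec, map_neg, _root_.map_smul]
    have hiu : IsUnit u := ⟨Unitary.toUnits hB.1.eigenvectorUnitary, rfl⟩
    have hinv : u⁻¹ = star u := Matrix.inv_eq_right_inv hu1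
    have hvec : NormedSpace.exp (-(t • ev)) = fun i => Real.exp (-(t * ev i)) := by
      funext i
      rw [Pi.coe_exp, ← Real.exp_eq_exp_ℝ]
      simp [smul_eq_mul]
    rw [h0, hL, ← hinv, Matrix.exp_conj u (Matrix.diagonal (-(t • ev))) hiu, Matrix.exp_diagonal, hinv, hL, hvec]
  -- the coefficient functions and matrices
  set c : Fin M → ℝ → ℝ := fun i t =>
    (Real.sqrt t)⁻¹ * Real.exp (-t) * (Real.exp (-(t * ev i)) - 1 + t * ev i) with hc_def
  set C : Fin M → Matrix (Fin M) (Fin M) ℝ := fun i => L (Pi.single i 1) with hC_def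
  have hsum : ∀ a : Fin M → ℝ, ∑ i, a i • C i = L a := by
    intro a
    simp only [hC_def, ← _root_.map_smul, ← map_sum]
    congr 1
    funext j
    simp [Pi.single_apply, Finset.sum_apply, smul_eq_mul, mul_ite, Finset.sum_ite_eq]
  have hFt : ∀ t : ℝ, ((Real.sqrt t)⁻¹ * Real.exp (-t)) •
      (NormedSpace.exp (-(t • B)) - 1 + t • B) = ∑ i, c i t • C i := by
    intro t
    rw [hsum (fun i => c i t), hexp t, hspec, ← hone, ← _root_.map_smul, ← map_sub, ← map_add,
      ← _root_.map_smul]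
    congr 1
  have hci : ∀ i, IntegrableOn (c i) (Ioi 0) volume :=
    fun i => (scalar_key (hB.eigenvalues_nonneg i)).1
  have hFint : IntegrableOn (fun t : ℝ => ∑ i, c i t • C i) (Ioi 0) volume :=
    integrable_finset_sum _ (fun i _ => (hci i).smul_const _)
  constructor
  · exact hFint.congr_fun (fun t _ => (hFt t).symm ▸ rfl) measurableSet_Ioi
  · have hIval : ∫ t in Ioi (0:ℝ), ((Real.sqrt t)⁻¹ * Real.exp (-t)) •
        (NormedSpace.exp (-(t • B)) - 1 + t • B)
        = L (fun i => Real.sqrt Real.pi * ((Real.sqrt (1 + ev i))⁻¹ - 1 + ev i / 2)) := by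
      rw [setIntegral_congr_fun measurableSet_Ioi (fun t _ => hFt t),
        integral_finset_sum _ (fun i _ => (hci i).smul_const _)]
      simp_rw [integral_smul_const]
      have : ∀ i : Fin M, (∫ t in Ioi (0:ℝ), c i t)
          = Real.sqrt Real.pi * ((Real.sqrt (1 + ev i))⁻¹ - 1 + ev i / 2) :=
        fun i => (scalar_key (hB.eigenvalues_nonneg i)).2
      simp_rw [this]
      exact hsum _
    rw [hIval]
    -- identify the square root
    set μ : Fin M → ℝ := fun i => (Real.sqrt (1 + ev i))⁻¹ with hμ_def
    have hposi : ∀ i, (0:ℝ) < 1 + ev i := fun i => by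
      have := hB.eigenvalues_nonneg i; linarith
    have hCps : (L μ).PosSemidef := by
      rw [hL, Matrix.star_eq_conjTranspose]
      have hd : (Matrix.diagonal μ).PosSemidef :=
        Matrix.posSemidef_diagonal_iff.mpr (fun i => by positivity)
      exact hd.mul_mul_conjTranspose_same u
    have hsq : (L μ) ^ 2 = ((1 : Matrix (Fin M) (Fin M) ℝ) + B)⁻¹ := by
      rw [pow_two, hmul]
      refine (Matrix.inv_eq_right_inv ?_).symm
      have h1B : (1 : Matrix (Fin M) (Fin M) ℝ) + B = L (1 + ev) := by
        rw [map_add, hone, hspec]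
      rw [h1B, hmul, ← hone]
      congr 1
      funext i
      have hs : Real.sqrt (1 + ev i) * Real.sqrt (1 + ev i) = 1 + ev i :=
        Real.mul_self_sqrt (hposi i).le
      have hne : Real.sqrt (1 + ev i) ≠ 0 := ne_of_gt (Real.sqrt_pos.mpr (hposi i))
      simp only [hμ_def, Pi.mul_apply, Pi.add_apply, Pi.one_apply]
      field_simp
      linarith [hs]
    have hsqrt : h1.sqrt = L μ := psd_sqrt_unique_aux h1 hCps hsq
    rw [hsqrt, hspec, ← hone, ← _root_.map_smul, ← _root_.map_smul, ← map_sub, ← map_add]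
    congr 1
    funext i
    have hπ : Real.sqrt Real.pi ≠ 0 := by
      have := Real.pi_pos; positivity
    simp only [hμ_def, Pi.add_apply, Pi.sub_apply, Pi.smul_apply, Pi.one_apply, smul_eq_mul]
    field_simp
    ring
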